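/- With ω, v₁ as in the critical-energy solution (h = h₀, shifted time), define R = (σ/2)√(J/M)(K₂²−1)/K₂, C₁ = 1+K₂², C₂ = K₂²−1. Then the velocity V_C(t) := v₁(t) − R ω(t) equals σ√(2h₀/M)·K₃(4K₂² + C₂²)t / (K₂ (C₁²t² + K₃²)), and in particular V_C(t) → 0 as t → ±∞ and V_C(t) = O(1/t) as |t| → ∞. -/

import Mathlib

open Filter Asymptotics

theorem critical_velocity_formula
    (h₀ J M K₂ K₃ σ : ℝ) (hh₀ : h₀ > 0) (hJ : J > 0) (hM : M > 0)
    (hK₂ : K₂ ≠ 0) (hK₃ : K₃ ≠ 0) (hσ : σ = 1 ∨ σ = -1)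
    (C₁ C₂ R : ℝ) (hC₁ : C₁ = 1 + K₂ ^ 2) (hC₂ : C₂ = K₂ ^ 2 - 1)
    (hR : R = (σ / 2) * Real.sqrt (J / M) * (K₂ ^ 2 - 1) / K₂)
    (ω v₁ V_C : ℝ → ℝ)
    (hω : ∀ t, ω t = 2 * Real.sqrt (2 * h₀ / J) *
      ((C₁ ^ 2 * K₂ * t ^ 2 - K₃ * C₁ * C₂ * t - K₂ * K₃ ^ 2) /
        (C₁ * (C₁ ^ 2 * t ^ 2 + K₃ ^ 2))))
    (hv : ∀ t, v₁ t = σ * Real.sqrt (2 * h₀ / M) *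
      ((C₁ ^ 2 * C₂ * t ^ 2 + 4 * K₃ * K₂ * C₁ * t - K₃ ^ 2 * C₂) /
        (C₁ * (C₁ ^ 2 * t ^ 2 + K₃ ^ 2))))
    (hVC : ∀ t, V_C t = v₁ t - R * ω t) :
    (∀ t, V_C t = σ * Real.sqrt (2 * h₀ / M) *
      (K₃ * (4 * K₂ ^ 2 + C₂ ^ 2) * t / (K₂ * (C₁ ^ 2 * t ^ 2 + K₃ ^ 2)))) ∧
    Tendsto V_C atTop (nhds 0) ∧ Tendsto V_C atBot (nhds 0) ∧
    V_C =O[atTop] (fun t => 1 / t) ∧ V_C =O[atBot] (fun t => 1 / t) := by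
  have hC₁pos : 0 < C₁ := by rw [hC₁]; positivity
  have hDpos : ∀ t : ℝ, 0 < C₁ ^ 2 * t ^ 2 + K₃ ^ 2 := fun t => by positivity
  -- sqrt identity
  have hbc : Real.sqrt (J / M) * Real.sqrt (2 * h₀ / J) = Real.sqrt (2 * h₀ / M) := by
    rw [← Real.sqrt_mul (by positivity)]
    congr 1
    field_simp
  -- main formula
  have hform : ∀ t, V_C t = σ * Real.sqrt (2 * h₀ / M) *
      (K₃ * (4 * K₂ ^ 2 + C₂ ^ 2) * t / (K₂ * (C₁ ^ 2 * t ^ 2 + K₃ ^ 2))) := by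
    intro t
    rw [hVC, hv, hω, hR, ← hbc]
    have hD := (hDpos t).ne'
    field_simp
    rw [hC₂]
    ring
  refine ⟨hform, ?_⟩
  set c' : ℝ := σ * Real.sqrt (2 * h₀ / M) * (K₃ * (4 * K₂ ^ 2 + C₂ ^ 2) / K₂) with hc'
  have hform2 : ∀ t, V_C t = c' * (t / (C₁ ^ 2 * t ^ 2 + K₃ ^ 2)) := by
    intro t
    rw [hform t, hc']
    have hD := (hDpos t).ne'
    field_simp
  -- key bound for |t| ≥ 1
  have hbound : ∀ t : ℝ, 1 ≤ |t| → ‖V_C t‖ ≤ (|c'| / C₁ ^ 2) * ‖1 / t‖ := by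
    intro t ht
    have ht0 : t ≠ 0 := by intro h; rw [h] at ht; simp at ht; linarith
    have habs : (0:ℝ) < |t| := lt_of_lt_of_le one_pos ht
    rw [hform2 t]
    simp only [Real.norm_eq_abs, abs_mul, abs_div, abs_one, abs_of_pos (hDpos t)]
    have h1 : |t| / (C₁ ^ 2 * t ^ 2 + K₃ ^ 2) ≤ 1 / (C₁ ^ 2 * |t|) := by
      rw [div_le_div_iff₀ (hDpos t) (by positivity)]
      nlinarith [sq_abs t, sq_nonneg K₃, sq_nonneg t]
    calc |c'| * (|t| / (C₁ ^ 2 * t ^ 2 + K₃ ^ 2))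
        ≤ |c'| * (1 / (C₁ ^ 2 * |t|)) := by
          exact mul_le_mul_of_nonneg_left h1 (abs_nonneg _)
      _ = |c'| / C₁ ^ 2 * (1 / |t|) := by
          field_simp
  have hOtop : V_C =O[atTop] (fun t : ℝ => 1 / t) := by
    rw [isBigO_iff]
    refine ⟨|c'| / C₁ ^ 2, ?_⟩
    filter_upwards [eventually_ge_atTop (1:ℝ)] with t ht
    exact hbound t (le_trans ht (le_abs_self t))
  have hObot : V_C =O[atBot] (fun t : ℝ => 1 / t) := by
    rw [isBigO_iff]
    refine ⟨|c'| / C₁ ^ 2, ?_⟩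
    filter_upwards [eventually_le_atBot (-1:ℝ)] with t ht
    exact hbound t (by rw [abs_of_nonpos (by linarith)]; linarith)
  have h1top : Tendsto (fun t : ℝ => 1 / t) atTop (nhds 0) := by
    simpa [one_div] using tendsto_inv_atTop_zero
  have h1bot : Tendsto (fun t : ℝ => 1 / t) atBot (nhds 0) := by
    have h := ((tendsto_inv_atTop_zero (𝕜 := ℝ)).comp tendsto_neg_atBot_atTop).neg
    rw [neg_zero] at h
    refine h.congr fun t => ?_
    simp [Function.comp, one_div, inv_neg]
  exact ⟨hOtop.trans_tendsto h1top, hObot.trans_tendsto h1bot, hOtop, hObot⟩
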